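/- For every p ∈ (0,1) there exist r > (ln 2)/(ln(8/7)) and β ∈ (0,1) such that H(β) + r·log₂( p·(1 − (1−β)³) + (1−p)·(7/8) ) > 0, where H(β) = −β·log₂ β − (1−β)·log₂(1−β) is the binary entropy function. (Note (ln 2)/(ln(8/7)) = 5.19… is the first-moment upper bound density for unbiased random 3-SAT.) -/

import Mathlib

/-- The binary entropy function `H(β) = -β log₂ β - (1-β) log₂ (1-β)`. -/
noncomputable def binH (β : ℝ) : ℝ :=
  -β * Real.logb 2 β - (1 - β) * Real.logb 2 (1 - β)

/-- For every `p ∈ (0,1)` there exist `r > ln 2 / ln (8/7)` (the first-moment upper bound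
density for unbiased random 3-SAT) and `β ∈ (0,1)` such that
`H(β) + r log₂( p (1 - (1-β)³) + (1-p) (7/8) ) > 0`. -/
theorem exists_density_above_first_moment (p : ℝ) (hp : p ∈ Set.Ioo (0 : ℝ) 1) :
    ∃ r > Real.log 2 / Real.log (8 / 7), ∃ β ∈ Set.Ioo (0 : ℝ) 1,
      0 < binH β + r * Real.logb 2 (p * (1 - (1 - β) ^ 3) + (1 - p) * (7 / 8)) := by
  obtain ⟨hp0, hp1⟩ := hp
  have hlog2 : (0:ℝ) < Real.log 2 := Real.log_pos (by norm_num)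
  have hlog87 : (0:ℝ) < Real.log (8/7) := Real.log_pos (by norm_num)
  set r₀ : ℝ := Real.log 2 / Real.log (8/7) with hr₀def
  have hr₀pos : 0 < r₀ := div_pos hlog2 hlog87
  set a : ℝ → ℝ := fun β => p * (1 - (1-β)^3) + (1-p)*(7/8) with ha
  set g : ℝ → ℝ := fun β => binH β + r₀ * Real.logb 2 (a β) with hgdef
  have ha_half : a (1/2) = 7/8 := by simp only [ha]; ring
  -- g (1/2) = 0
  have hghalf : g (1/2) = 0 := by
    have h1 : Real.logb 2 (1/2 : ℝ) = -1 := by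
      rw [show (1/2:ℝ) = 2⁻¹ by norm_num, Real.logb_inv, Real.logb_self_eq_one] <;> norm_num
    have h2 : Real.log (7/8 : ℝ) = -Real.log (8/7) := by
      rw [show (7/8:ℝ) = (8/7)⁻¹ by norm_num, Real.log_inv]
    have h3 : r₀ * Real.logb 2 (7/8:ℝ) = -1 := by
      rw [Real.logb, h2, hr₀def]
      field_simp
    simp only [hgdef, binH, ha_half, h3]
    norm_num [h1]
  -- derivative of g at 1/2 is positive
  have h2' : HasDerivAt (fun β : ℝ => (1:ℝ) - β) (-1) (1/2) := by
    simpa using (hasDerivAt_id (1/2:ℝ)).const_sub 1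
  have h1' : HasDerivAt (fun β : ℝ => β * Real.log β) (Real.log (1/2) + 1) (1/2) :=
    Real.hasDerivAt_mul_log (by norm_num)
  have h3' : HasDerivAt (fun β : ℝ => (1-β) * Real.log (1-β))
      ((Real.log (1/2) + 1) * (-1)) (1/2) := by
    have h := (Real.hasDerivAt_mul_log (x := (1:ℝ) - 1/2) (by norm_num)).comp (1/2) h2'
    rw [show (1:ℝ) - 1/2 = 1/2 by norm_num] at h
    exact h
  have ha' : HasDerivAt a (p * (3/4)) (1/2) := by
    have hcube : HasDerivAt (fun β : ℝ => (1-β)^3) ((3:ℕ) * ((1:ℝ)-1/2)^(3-1) * (-1)) (1/2) :=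
      h2'.pow 3
    have h1m : HasDerivAt (fun β : ℝ => (1:ℝ) - (1-β)^3)
        (-((3:ℕ) * ((1:ℝ)-1/2)^(3-1) * (-1))) (1/2) := hcube.const_sub 1
    have := (h1m.const_mul p).add_const ((1-p)*(7/8))
    refine this.congr_deriv ?_
    norm_num
  have hlogA : HasDerivAt (fun β : ℝ => Real.log (a β)) ((7/8:ℝ)⁻¹ * (p * (3/4))) (1/2) := by
    have := (Real.hasDerivAt_log (x := a (1/2)) (by rw [ha_half]; norm_num)).comp (1/2) ha'
    rw [ha_half] at this
    simpa [Function.comp_def] using this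
  set c : ℝ := (r₀ * ((7/8:ℝ)⁻¹ * (p * (3/4)))) * (Real.log 2)⁻¹ with hcdef
  have hcpos : 0 < c := by
    apply mul_pos
    · exact mul_pos hr₀pos (by positivity)
    · exact inv_pos.mpr hlog2
  have hF : HasDerivAt
      (fun β : ℝ => (-(β * Real.log β) - (1-β) * Real.log (1-β) + r₀ * Real.log (a β))
        * (Real.log 2)⁻¹) c (1/2) := by
    have := ((h1'.neg.sub h3').add (hlogA.const_mul r₀)).mul_const (Real.log 2)⁻¹
    refine this.congr_deriv ?_
    rw [hcdef]; ring
  have hg' : HasDerivAt g c (1/2) := by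
    refine hF.congr_of_eventuallyEq (Filter.Eventually.of_forall fun β => ?_)
    simp only [hgdef, binH, Real.logb, div_eq_mul_inv]
    ring
  -- find β slightly above 1/2 with g β > 0
  rw [hasDerivAt_iff_tendsto_slope] at hg'
  have hev : ∀ᶠ β in nhdsWithin (1/2:ℝ) {(1/2:ℝ)}ᶜ, 0 < slope g (1/2) β :=
    hg'.eventually (eventually_gt_nhds hcpos)
  have hev2 : ∀ᶠ β in nhdsWithin (1/2:ℝ) (Set.Ioi (1/2)), 0 < slope g (1/2) β :=
    hev.filter_mono (nhdsWithin_mono _ (fun x hx => hx.ne'))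
  have hev3 : ∀ᶠ β in nhdsWithin (1/2:ℝ) (Set.Ioi (1/2)), β < 1 :=
    (eventually_lt_nhds (by norm_num : (1/2:ℝ) < 1)).filter_mono nhdsWithin_le_nhds
  obtain ⟨β, ⟨hslope, hβ1⟩, hβhalf⟩ :=
    ((hev2.and hev3).and (eventually_mem_nhdsWithin (a := (1/2:ℝ)) (s := Set.Ioi (1/2)))).exists
  have hβhalf : (1/2:ℝ) < β := hβhalf
  have hβ0 : (0:ℝ) < β := by linarith
  have hgβ : 0 < g β := by
    rw [slope_def_field, hghalf, sub_zero] at hslope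
    have hden : 0 < β - 1/2 := by linarith
    have := (div_pos_iff.mp hslope)
    rcases this with ⟨h, _⟩ | ⟨_, h⟩
    · exact h
    · linarith
  -- bounds on a β
  have h1mβ : 0 < 1 - β := by linarith
  have h1mβ' : 1 - β < 1/2 := by linarith
  have hcube_lt : (1-β)^3 < 1 :=
    pow_lt_one₀ (by linarith) (by linarith) (by norm_num)
  have hcube_pos : 0 < (1-β)^3 := pow_pos h1mβ 3
  have haβpos : 0 < a β := by
    simp only [ha]
    have : 0 < p * (1 - (1-β)^3) := mul_pos hp0 (by linarith)
    nlinarith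
  have haβlt1 : a β < 1 := by
    simp only [ha]
    nlinarith
  set L : ℝ := Real.logb 2 (a β) with hLdef
  have hLneg : L < 0 := Real.logb_neg (by norm_num) haβpos haβlt1
  -- choose r slightly above r₀
  refine ⟨r₀ + g β / (2 * (-L)), ?_, β, ⟨hβ0, hβ1⟩, ?_⟩
  · have : 0 < g β / (2 * (-L)) := div_pos hgβ (by linarith)
    linarith
  · have hkey : binH β + (r₀ + g β / (2 * (-L))) * L = g β / 2 := by
      have hgβeq : g β = binH β + r₀ * L := by rw [hgdef]
      have hLne : L ≠ 0 := ne_of_lt hLneg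
      field_simp
      nlinarith [hgβeq]
    rw [← hLdef, hkey]
    exact half_pos hgβ
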